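/- arXiv:math/0303235 — 8 statements merged into one kernel-verified Lean document; each statement's English description precedes it below -/
import Mathlib

section
/- Let T_t be a C0-semigroup on a Hilbert space H with generator A satisfying ‖T_t‖ ≤ M e^{γt} for all t ≥ 0. If u is a unit vector, λ ∈ ℂ, 0 < ε < 1/2, and there exists w ∈ Dom(A) with ‖u − w‖ + ‖Aw − λw‖ < ε, then Re(λ) ≤ γ + 2Mε. -/
open Filter Set

/-- Let `T_t` be a C₀-semigroup on a Hilbert space `H` with generator `A`
satisfying `‖T_t‖ ≤ M e^{γt}` for `t ≥ 0`.  If `u` is a unit vector, `λ ∈ ℂ`,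
`0 < ε < 1/2`, and there is `w ∈ Dom(A)` with `‖u − w‖ + ‖Aw − λw‖ < ε`, then
`Re(λ) ≤ γ + 2Mε`. -/
theorem approximate_eigenvalue_re_bound
    {H : Type*} [NormedAddCommGroup H] [InnerProductSpace ℂ H] [CompleteSpace H]
    (T : ℝ → H →L[ℂ] H)
    (hT0 : T 0 = 1)
    (hTadd : ∀ s t : ℝ, 0 ≤ s → 0 ≤ t → T (s + t) = (T s).comp (T t))
    (M γ : ℝ) (hM : 1 ≤ M)
    (hTnorm : ∀ t : ℝ, 0 ≤ t → ‖T t‖ ≤ M * Real.exp (γ * t))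
    (D : Set H) (A : H → H)
    (hgen : ∀ w ∈ D, ∀ t : ℝ, 0 ≤ t → HasDerivAt (fun r => T r w) (T t (A w)) t)
    (ε : ℝ) (hε0 : 0 < ε) (hε : ε < 1 / 2)
    (u : H) (hu : ‖u‖ = 1) (lam : ℂ)
    (happrox : ∃ w ∈ D, ‖u - w‖ + ‖A w - lam • w‖ < ε) :
    lam.re ≤ γ + 2 * M * ε := by
  obtain ⟨w, hwD, hw⟩ := happrox
  set r : H := A w - lam • w with hrdef
  have hδ : ‖r‖ < ε := lt_of_le_of_lt (le_add_of_nonneg_left (norm_nonneg _)) hw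
  have huw : ‖u - w‖ < ε := lt_of_le_of_lt (le_add_of_nonneg_right (norm_nonneg _)) hw
  have hwlb : 1 - ε < ‖w‖ := by
    have h1 : ‖u‖ - ‖w‖ ≤ ‖u - w‖ := norm_sub_norm_le u w
    rw [hu] at h1; linarith
  by_contra hcon
  push_neg at hcon
  have hM0 : (0:ℝ) < M := lt_of_lt_of_le one_pos hM
  set c : ℝ := lam.re - γ with hcdef
  have hc0 : 0 < c := by
    have : 0 < 2 * M * ε := by positivity
    simp only [hcdef]; linarith
  set f : ℝ → H := fun s => Complex.exp (-lam * s) • T s w with hfdef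
  -- derivative of f
  have hf' : ∀ s : ℝ, 0 ≤ s → HasDerivAt f (Complex.exp (-lam * s) • T s r) s := by
    intro s hs
    have hbase : HasDerivAt (fun s : ℝ => (-lam) * (s : ℂ)) (-lam) s := by
      simpa using (Complex.ofRealCLM.hasDerivAt (x := s)).const_mul (-lam)
    have h1 : HasDerivAt (fun s : ℝ => Complex.exp (-lam * s))
        (Complex.exp (-lam * s) * (-lam)) s := hbase.cexp
    have h2 := hgen w hwD s hs
    have h3 := h1.fun_smul h2
    convert h3 using 1
    simp only [hrdef, map_sub, (T s).map_smul, smul_sub, smul_smul]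
    module
  -- norm bound for the derivative
  have hnormf' : ∀ s : ℝ, 0 ≤ s →
      ‖Complex.exp (-lam * s) • T s r‖ ≤ M * ‖r‖ * Real.exp (-(c * s)) := by
    intro s hs
    have habs : ‖Complex.exp (-lam * s)‖ = Real.exp (-(lam.re * s)) := by
      rw [Complex.norm_exp]
      congr 1
      simp [Complex.mul_re]
    rw [norm_smul, habs]
    have hTs : ‖T s r‖ ≤ M * Real.exp (γ * s) * ‖r‖ :=
      le_trans ((T s).le_opNorm r)
        (mul_le_mul_of_nonneg_right (hTnorm s hs) (norm_nonneg _))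
    calc Real.exp (-(lam.re * s)) * ‖T s r‖
        ≤ Real.exp (-(lam.re * s)) * (M * Real.exp (γ * s) * ‖r‖) := by
          exact mul_le_mul_of_nonneg_left hTs (Real.exp_nonneg _)
      _ = M * ‖r‖ * Real.exp (-(c * s)) := by
          have hexp : Real.exp (-(c * s)) = Real.exp (-(lam.re * s)) * Real.exp (γ * s) := by
            rw [← Real.exp_add]; congr 1; rw [hcdef]; ring
          rw [hexp]; ring
  -- boundary function
  set B : ℝ → ℝ := fun x => (M * ‖r‖ / c) * (1 - Real.exp (-(c * x))) with hBdef
  have hB : ∀ x : ℝ, HasDerivAt B (M * ‖r‖ * Real.exp (-(c * x))) x := by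
    intro x
    have h1 : HasDerivAt (fun x : ℝ => -(c * x)) (-c) x := by
      simpa using ((hasDerivAt_id x).const_mul c).fun_neg
    have h2 : HasDerivAt (fun x : ℝ => Real.exp (-(c * x)))
        (Real.exp (-(c * x)) * (-c)) x := h1.exp
    have h3 := ((hasDerivAt_const x (1:ℝ)).fun_sub h2).const_mul (M * ‖r‖ / c)
    convert h3 using 1
    · rfl
    · rfl
    field_simp
    ring
  -- main estimate via the fencing theorem
  have key : ∀ t : ℝ, 0 ≤ t → ‖f t - w‖ ≤ B t := by
    intro t ht
    have hmem : ∀ x ∈ Icc (0:ℝ) t, 0 ≤ x := fun x hx => hx.1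
    have hg' : ∀ x ∈ Ico (0:ℝ) t, HasDerivWithinAt (fun x => f x - w)
        (Complex.exp (-lam * x) • T x r) (Ici x) x := fun x hx =>
      (((hf' x hx.1).sub_const w)).hasDerivWithinAt
    have hgc : ContinuousOn (fun x => f x - w) (Icc 0 t) := fun x hx =>
      (((hf' x (hmem x hx)).sub_const w)).continuousAt.continuousWithinAt
    have ha : ‖f 0 - w‖ ≤ B 0 := by
      simp [hfdef, hBdef, hT0]
    have := image_norm_le_of_norm_deriv_right_le_deriv_boundary hgc hg' ha hB
      (fun x hx => hnormf' x hx.1)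
    exact this (right_mem_Icc.2 ht)
  -- hence a bound on ‖w‖ for every t ≥ 0
  have hwt : ∀ t : ℝ, 0 ≤ t → ‖w‖ ≤ M * ‖w‖ * Real.exp (-(c * t)) + M * ‖r‖ / c := by
    intro t ht
    have hBt : B t ≤ M * ‖r‖ / c := by
      have h1 : 1 - Real.exp (-(c * t)) ≤ 1 := by
        have := Real.exp_nonneg (-(c * t)); linarith
      have h2 : 0 ≤ M * ‖r‖ / c := by positivity
      calc B t = (M * ‖r‖ / c) * (1 - Real.exp (-(c * t))) := rfl
        _ ≤ (M * ‖r‖ / c) * 1 := mul_le_mul_of_nonneg_left h1 h2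
        _ = M * ‖r‖ / c := mul_one _
    have hft : ‖f t‖ ≤ M * ‖w‖ * Real.exp (-(c * t)) := by
      have habs : ‖Complex.exp (-lam * t)‖ = Real.exp (-(lam.re * t)) := by
        rw [Complex.norm_exp]; congr 1
        simp [Complex.mul_re]
      have hTs : ‖T t w‖ ≤ M * Real.exp (γ * t) * ‖w‖ :=
        le_trans ((T t).le_opNorm w)
          (mul_le_mul_of_nonneg_right (hTnorm t ht) (norm_nonneg _))
      calc ‖f t‖ = Real.exp (-(lam.re * t)) * ‖T t w‖ := by rw [norm_smul, habs]
        _ ≤ Real.exp (-(lam.re * t)) * (M * Real.exp (γ * t) * ‖w‖) :=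
            mul_le_mul_of_nonneg_left hTs (Real.exp_nonneg _)
        _ = M * ‖w‖ * Real.exp (-(c * t)) := by
            have hexp : Real.exp (-(c * t)) = Real.exp (-(lam.re * t)) * Real.exp (γ * t) := by
              rw [← Real.exp_add]; congr 1; rw [hcdef]; ring
            rw [hexp]; ring
    have h1 : ‖w‖ ≤ ‖f t‖ + ‖f t - w‖ := by
      have := norm_sub_le (f t) (f t - w)
      simpa using this
    have := key t ht
    linarith
  -- let t → ∞
  have hlim : Tendsto (fun t : ℝ => M * ‖w‖ * Real.exp (-(c * t)) + M * ‖r‖ / c)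
      atTop (nhds (M * ‖r‖ / c)) := by
    have h1 : Tendsto (fun t : ℝ => c * t) atTop atTop :=
      Tendsto.const_mul_atTop hc0 tendsto_id
    have h2 : Tendsto (fun t : ℝ => -(c * t)) atTop atBot :=
      tendsto_neg_atBot_iff.2 h1
    have h3 : Tendsto (fun t : ℝ => Real.exp (-(c * t))) atTop (nhds 0) :=
      Real.tendsto_exp_atBot.comp h2
    have h4 : Tendsto (fun t : ℝ => M * ‖w‖ * Real.exp (-(c * t))) atTop (nhds 0) := by
      simpa using h3.const_mul (M * ‖w‖)
    simpa using h4.add_const (M * ‖r‖ / c)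
  have hwle : ‖w‖ ≤ M * ‖r‖ / c :=
    ge_of_tendsto hlim (eventually_atTop.2 ⟨0, fun t ht => hwt t ht⟩)
  -- final contradiction
  have hlt : M * ‖r‖ / c < 1 / 2 := by
    rw [div_lt_iff₀ hc0]
    have h1 : M * ‖r‖ < M * ε := mul_lt_mul_of_pos_left hδ hM0
    have h2 : 2 * M * ε < c := by simp only [hcdef]; linarith
    nlinarith
  linarith
end

section
/- If w ∈ Dom(A), λ ∈ ℂ with μ = Re(λ), and ‖Aw − λw‖ < ε, then for all t ≥ 0, ‖T_t w − e^{λt} w‖ ≤ Mε (e^{μt} − e^{γt})/(μ − γ) when μ ≠ γ, this bound being obtained from the identity T_t w − e^{λt} w = ∫_0^t T_{t−s} e^{λs} (λw − Aw) ds. -/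
/-- If `w ∈ Dom(A)`, `λ ∈ ℂ` with `μ = Re(λ) ≠ γ`, and
`‖Aw − λw‖ < ε`, then for all `t ≥ 0`,
`‖T_t w − e^{λt} w‖ ≤ Mε (e^{μt} − e^{γt})/(μ − γ)`. -/
theorem semigroup_approximate_eigenvector_bound
    {H : Type*} [NormedAddCommGroup H] [InnerProductSpace ℂ H] [CompleteSpace H]
    (T : ℝ → H →L[ℂ] H)
    (hT0 : T 0 = 1)
    (hTadd : ∀ s t : ℝ, 0 ≤ s → 0 ≤ t → T (s + t) = (T s).comp (T t))
    (M γ : ℝ)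
    (hTnorm : ∀ t : ℝ, 0 ≤ t → ‖T t‖ ≤ M * Real.exp (γ * t))
    (D : Set H) (A : H → H)
    (hgen : ∀ w ∈ D, ∀ t : ℝ, 0 ≤ t → HasDerivAt (fun r => T r w) (T t (A w)) t)
    (ε : ℝ) (hε0 : 0 < ε)
    (w : H) (hw : w ∈ D) (lam : ℂ)
    (happrox : ‖A w - lam • w‖ < ε)
    (hne : lam.re ≠ γ) :
    ∀ t : ℝ, 0 ≤ t →
      ‖T t w - Complex.exp (lam * t) • w‖ ≤
        M * ε * (Real.exp (lam.re * t) - Real.exp (γ * t)) / (lam.re - γ) := by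
  intro t ht
  set μ := lam.re with hμ
  -- the function g
  set g : ℝ → H := fun s => Complex.exp (lam * s) • T (t - s) w with hg
  -- derivative of g
  have hderiv : ∀ s ∈ Set.Icc (0:ℝ) t,
      HasDerivAt g (Complex.exp (lam * s) • T (t - s) (lam • w - A w)) s := by
    intro s hs
    have hts : (0:ℝ) ≤ t - s := by linarith [hs.2]
    have h1 : HasDerivAt (fun s : ℝ => T (t - s) w) ((-1:ℝ) • T (t - s) (A w)) s := by
      have hout := hgen w hw (t - s) hts
      have hin : HasDerivAt (fun s : ℝ => t - s) (-1) s := by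
        simpa using (hasDerivAt_id s).const_sub t
      exact hout.scomp s hin
    have h2 : HasDerivAt (fun s : ℝ => Complex.exp (lam * s))
        (Complex.exp (lam * s) * lam) s := by
      have : HasDerivAt (fun z : ℂ => Complex.exp (lam * z))
          (Complex.exp (lam * s) * lam) (s : ℂ) := by
        simpa using ((hasDerivAt_id (s:ℂ)).const_mul lam).cexp
      exact this.comp_ofReal
    have h3 := h2.smul h1
    convert h3 using 1
    · rfl
    rw [map_sub, map_smul, smul_sub]
    simp only [smul_smul, neg_one_smul, smul_neg]
    ring_nf
    rw [mul_comm lam (Complex.exp (lam * s))]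
    abel
  -- bound on the derivative
  have hbound : ∀ s ∈ Set.Icc (0:ℝ) t,
      ‖Complex.exp (lam * s) • T (t - s) (lam • w - A w)‖
        ≤ M * ε * Real.exp (γ * t) * Real.exp ((μ - γ) * s) := by
    intro s hs
    have hts : (0:ℝ) ≤ t - s := by linarith [hs.2]
    have hnorm : ‖T (t - s) (lam • w - A w)‖ ≤ M * Real.exp (γ * (t - s)) * ε := by
      calc ‖T (t - s) (lam • w - A w)‖ ≤ ‖T (t - s)‖ * ‖lam • w - A w‖ :=
            (T (t - s)).le_opNorm _
        _ ≤ M * Real.exp (γ * (t - s)) * ε := by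
            apply mul_le_mul (hTnorm _ hts) ?_ (norm_nonneg _)
              ((norm_nonneg (T (t-s))).trans (hTnorm _ hts))
            rw [← neg_sub (A w) (lam • w), norm_neg]
            exact happrox.le
    have habs : ‖Complex.exp (lam * s)‖ = Real.exp (μ * s) := by
      rw [Complex.norm_exp]
      congr 1
      simp [hμ]
    rw [norm_smul, habs]
    calc Real.exp (μ * s) * ‖T (t - s) (lam • w - A w)‖
        ≤ Real.exp (μ * s) * (M * Real.exp (γ * (t - s)) * ε) := by
          exact mul_le_mul_of_nonneg_left hnorm (Real.exp_nonneg _)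
      _ = M * ε * Real.exp (γ * t) * Real.exp ((μ - γ) * s) := by
          have e1 : Real.exp (γ * t) * Real.exp ((μ - γ) * s)
              = Real.exp (μ * s) * Real.exp (γ * (t - s)) := by
            rw [← Real.exp_add, ← Real.exp_add]; congr 1; ring
          linear_combination (-(M * ε)) * e1
  -- the comparison function B
  set B : ℝ → ℝ := fun s => M * ε * Real.exp (γ * t) * ((Real.exp ((μ - γ) * s) - 1) / (μ - γ)) with hB
  have hμγ : μ - γ ≠ 0 := sub_ne_zero.2 hne
  have hBderiv : ∀ s : ℝ, HasDerivAt B (M * ε * Real.exp (γ * t) * Real.exp ((μ - γ) * s)) s := by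
    intro s
    have h1 : HasDerivAt (fun s : ℝ => Real.exp ((μ - γ) * s)) (Real.exp ((μ - γ) * s) * (μ - γ)) s := by
      simpa using ((hasDerivAt_id s).const_mul (μ - γ)).exp
    have h2 : HasDerivAt (fun s : ℝ => (Real.exp ((μ - γ) * s) - 1) / (μ - γ))
        (Real.exp ((μ - γ) * s) * (μ - γ) / (μ - γ)) s := (h1.sub_const 1).div_const _
    rw [mul_div_assoc, div_self hμγ, mul_one] at h2
    simpa [hB, mul_assoc] using h2.const_mul (M * ε * Real.exp (γ * t))
  -- apply the mean value comparison to f = g - g 0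
  have key := image_norm_le_of_norm_deriv_right_le_deriv_boundary
    (f := fun s => g s - g 0) (a := 0) (b := t)
    (f' := fun s => Complex.exp (lam * s) • T (t - s) (lam • w - A w))
    (B := B) (B' := fun s => M * ε * Real.exp (γ * t) * Real.exp ((μ - γ) * s))
    ?_ ?_ ?_ hBderiv ?_
  · have hmem : t ∈ Set.Icc (0:ℝ) t := ⟨ht, le_refl t⟩
    have := key hmem
    have hgt : g t = Complex.exp (lam * t) • w := by
      simp [hg, hT0]
    have hg0 : g 0 = T t w := by
      simp [hg]
    rw [hgt, hg0, ← norm_sub_rev] at this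
    refine this.trans (le_of_eq ?_)
    rw [hB]
    have e2 : Real.exp (γ * t) * Real.exp ((μ - γ) * t) = Real.exp (μ * t) := by
      rw [← Real.exp_add]; congr 1; ring
    field_simp
    rw [mul_comm t (μ - γ), mul_comm t μ]
    linear_combination M * e2
  · intro s hs
    exact (((hderiv s hs).sub_const (g 0)).continuousAt).continuousWithinAt
  · intro s hs
    exact ((hderiv s ⟨hs.1, hs.2.le⟩).sub_const (g 0)).hasDerivWithinAt
  · simp [hB]
  · intro s hs
    exact hbound s ⟨hs.1, hs.2.le⟩
end

section
/- If w ∈ Dom(A), λ ∈ ℂ with Re(λ) ≤ γ, and ‖Aw − λw‖ < ε, then ‖T_t w − e^{λt} w‖ ≤ ε M t e^{γt} for all t ≥ 0. -/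
/-- If `w ∈ Dom(A)`, `λ ∈ ℂ` with `Re(λ) ≤ γ`, and `‖Aw − λw‖ < ε`,
then `‖T_t w − e^{λt} w‖ ≤ ε M t e^{γt}` for all `t ≥ 0`. -/
theorem semigroup_approximate_eigenvector_linear_bound
    {H : Type*} [NormedAddCommGroup H] [InnerProductSpace ℂ H] [CompleteSpace H]
    (T : ℝ → H →L[ℂ] H)
    (hT0 : T 0 = 1)
    (hTadd : ∀ s t : ℝ, 0 ≤ s → 0 ≤ t → T (s + t) = (T s).comp (T t))
    (M γ : ℝ)
    (hTnorm : ∀ t : ℝ, 0 ≤ t → ‖T t‖ ≤ M * Real.exp (γ * t))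
    (D : Set H) (A : H → H)
    (hgen : ∀ w ∈ D, ∀ t : ℝ, 0 ≤ t → HasDerivAt (fun r => T r w) (T t (A w)) t)
    (ε : ℝ) (hε0 : 0 < ε)
    (w : H) (hw : w ∈ D) (lam : ℂ)
    (happrox : ‖A w - lam • w‖ < ε)
    (hre : lam.re ≤ γ) :
    ∀ t : ℝ, 0 ≤ t →
      ‖T t w - Complex.exp (lam * t) • w‖ ≤ ε * M * t * Real.exp (γ * t) := by
  intro t ht
  have hM : 0 ≤ M := by
    have h1 := hTnorm 0 le_rfl
    simp [hT0] at h1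
    exact le_trans (norm_nonneg (1 : H →L[ℂ] H)) h1
  set g : ℝ → H := fun s => Complex.exp (lam * ((t : ℂ) - s)) • T s w with hgdef
  set g' : ℝ → H := fun s => Complex.exp (lam * ((t : ℂ) - s)) • T s (A w - lam • w)
    with hg'def
  have key : ∀ s ∈ Set.Icc (0:ℝ) t, HasDerivAt g (g' s) s := by
    intro s hs
    have hc : HasDerivAt (fun r : ℝ => lam * ((t:ℂ) - r)) (-lam) s := by
      have h := ((Complex.ofRealCLM.hasDerivAt (x := s)).const_sub (t:ℂ)).const_mul lam
      simpa using h
    have h1 : HasDerivAt (fun r : ℝ => Complex.exp (lam * ((t:ℂ) - r)))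
        (Complex.exp (lam * ((t:ℂ) - s)) * (-lam)) s := hc.cexp
    have h2 : HasDerivAt (fun r => T r w) (T s (A w)) s := hgen w hw s hs.1
    have h3 := h1.smul h2
    convert h3 using 1
    · exact rfl
    rw [hg'def]
    simp only [map_sub, map_smul, smul_sub, smul_smul]
    module
  have bound : ∀ s ∈ Set.Icc (0:ℝ) t, ‖g' s‖ ≤ ε * (M * Real.exp (γ * t)) := by
    intro s hs
    have hnorm_exp : ‖Complex.exp (lam * ((t:ℂ) - s))‖ = Real.exp (lam.re * (t - s)) := by
      rw [Complex.norm_exp]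
      congr 1
      push_cast
      simp [Complex.mul_re]
    have hle1 : Real.exp (lam.re * (t - s)) ≤ Real.exp (γ * (t - s)) :=
      Real.exp_le_exp.2 (mul_le_mul_of_nonneg_right hre (by linarith [hs.2]))
    have hle2 : ‖T s (A w - lam • w)‖ ≤ M * Real.exp (γ * s) * ε := by
      calc ‖T s (A w - lam • w)‖ ≤ ‖T s‖ * ‖A w - lam • w‖ := (T s).le_opNorm _
        _ ≤ (M * Real.exp (γ * s)) * ε := by
            apply mul_le_mul (hTnorm s hs.1) happrox.le (norm_nonneg _)
            positivity
    calc ‖g' s‖ = ‖Complex.exp (lam * ((t:ℂ) - s))‖ * ‖T s (A w - lam • w)‖ := norm_smul _ _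
      _ ≤ Real.exp (γ * (t - s)) * (M * Real.exp (γ * s) * ε) := by
          apply mul_le_mul (hnorm_exp ▸ hle1) hle2 (norm_nonneg _) (Real.exp_nonneg _)
      _ = ε * (M * Real.exp (γ * t)) := by
          rw [show γ * t = γ * (t - s) + γ * s by ring, Real.exp_add]; ring
  have main := (convex_Icc (0:ℝ) t).norm_image_sub_le_of_norm_hasDerivWithin_le
    (fun s hs => (key s hs).hasDerivWithinAt) bound
    (Set.left_mem_Icc.2 ht) (Set.right_mem_Icc.2 ht)
  have hgt : g t = T t w := by simp [hgdef]
  have hg0 : g 0 = Complex.exp (lam * t) • w := by simp [hgdef, hT0]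
  rw [hgt, hg0] at main
  calc ‖T t w - Complex.exp (lam * t) • w‖ ≤ ε * (M * Real.exp (γ * t)) * ‖t - 0‖ := main
    _ = ε * M * t * Real.exp (γ * t) := by
        rw [sub_zero, Real.norm_of_nonneg ht]; ring
end

section
/- If u is a unit vector, λ ∈ ℂ with Re(λ) ≤ γ, and there exists w ∈ Dom(A) with ‖u − w‖ + ‖Aw − λw‖ < ε, then ‖T_t u − e^{λt} u‖ ≤ ε (1 + M + Mt) e^{γt} for all t ≥ 0. -/
/-- If `u` is a unit vector, `λ ∈ ℂ` with `Re(λ) ≤ γ`, and there is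
`w ∈ Dom(A)` with `‖u − w‖ + ‖Aw − λw‖ < ε`, then
`‖T_t u − e^{λt} u‖ ≤ ε (1 + M + Mt) e^{γt}` for all `t ≥ 0`. -/
theorem semigroup_approximate_unit_eigenvector_bound
    {H : Type*} [NormedAddCommGroup H] [InnerProductSpace ℂ H] [CompleteSpace H]
    (T : ℝ → H →L[ℂ] H)
    (hT0 : T 0 = 1)
    (hTadd : ∀ s t : ℝ, 0 ≤ s → 0 ≤ t → T (s + t) = (T s).comp (T t))
    (M γ : ℝ) (hM : 1 ≤ M)
    (hTnorm : ∀ t : ℝ, 0 ≤ t → ‖T t‖ ≤ M * Real.exp (γ * t))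
    (D : Set H) (A : H → H)
    (hgen : ∀ w ∈ D, ∀ t : ℝ, 0 ≤ t → HasDerivAt (fun r => T r w) (T t (A w)) t)
    (ε : ℝ) (hε0 : 0 < ε)
    (u : H) (hu : ‖u‖ = 1) (lam : ℂ) (hre : lam.re ≤ γ)
    (happrox : ∃ w ∈ D, ‖u - w‖ + ‖A w - lam • w‖ < ε) :
    ∀ t : ℝ, 0 ≤ t →
      ‖T t u - Complex.exp (lam * t) • u‖ ≤ ε * (1 + M + M * t) * Real.exp (γ * t) := by
  obtain ⟨w, hwD, hw⟩ := happrox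
  intro t ht
  set a := ‖u - w‖ with ha_def
  set b := ‖A w - lam • w‖ with hb_def
  have ha0 : 0 ≤ a := norm_nonneg _
  have hb0 : 0 ≤ b := norm_nonneg _
  have ha : a < ε := lt_of_le_of_lt (le_add_of_nonneg_right hb0) hw
  have hb : b < ε := lt_of_le_of_lt (le_add_of_nonneg_left ha0) hw
  have hexp : ∀ r : ℝ, ‖Complex.exp (lam * r)‖ = Real.exp (lam.re * r) := by
    intro r
    rw [Complex.norm_exp]
    congr 1
    simp [Complex.mul_re]
  -- derivative bound for g r = exp(lam (t-r)) • T r w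
  set C := M * Real.exp (γ * t) * b with hC
  set g : ℝ → H := fun r => Complex.exp (lam * (↑t - ↑r)) • T r w with hg
  have hderiv : ∀ r ∈ Set.Icc (0:ℝ) t,
      HasDerivAt g (Complex.exp (lam * (↑t - ↑r)) • T r (A w - lam • w)) r := by
    intro r hr
    have hc : HasDerivAt (fun r : ℝ => Complex.exp (lam * (↑t - ↑r)))
        (Complex.exp (lam * (↑t - ↑r)) * (lam * (0 - 1))) r := by
      have h1 : HasDerivAt (fun r : ℝ => (r : ℂ)) 1 r := by
        simpa using (hasDerivAt_id r).ofReal_comp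
      exact (((hasDerivAt_const r (t:ℂ)).sub h1).const_mul lam).cexp
    have hf : HasDerivAt (fun r => T r w) (T r (A w)) r := hgen w hwD r hr.1
    have := hc.smul hf
    convert this using 1
    · rfl
    simp only [map_sub, map_smul, zero_sub, mul_neg_one]
    module
  have hbound : ∀ r ∈ Set.Icc (0:ℝ) t,
      ‖Complex.exp (lam * (↑t - ↑r)) • T r (A w - lam • w)‖ ≤ C := by
    intro r hr
    rw [norm_smul]
    have h1 : ‖Complex.exp (lam * (↑t - ↑r))‖ = Real.exp (lam.re * (t - r)) := by
      have := hexp (t - r)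
      simpa using this
    rw [h1]
    have h2 : ‖T r (A w - lam • w)‖ ≤ M * Real.exp (γ * r) * b := by
      calc ‖T r (A w - lam • w)‖ ≤ ‖T r‖ * b := (T r).le_opNorm _
        _ ≤ M * Real.exp (γ * r) * b :=
          mul_le_mul_of_nonneg_right (hTnorm r hr.1) hb0
    calc Real.exp (lam.re * (t - r)) * ‖T r (A w - lam • w)‖
        ≤ Real.exp (γ * (t - r)) * (M * Real.exp (γ * r) * b) := by
          apply mul_le_mul _ h2 (norm_nonneg _) (Real.exp_nonneg _)
          exact Real.exp_le_exp.2 (mul_le_mul_of_nonneg_right hre (by linarith [hr.2]))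
      _ = C := by
          have he : Real.exp (γ * (t - r)) * Real.exp (γ * r) = Real.exp (γ * t) := by
            rw [← Real.exp_add]; ring_nf
          rw [hC, ← he]; ring
  have hC0 : 0 ≤ C := by positivity
  have key : ‖T t w - Complex.exp (lam * t) • w‖ ≤ C * t := by
    have hmvt := Convex.norm_image_sub_le_of_norm_hasDerivWithin_le
      (f := g) (f' := fun r => Complex.exp (lam * (↑t - ↑r)) • T r (A w - lam • w))
      (fun r hr => (hderiv r hr).hasDerivWithinAt) hbound (convex_Icc 0 t)
      (Set.left_mem_Icc.2 ht) (Set.right_mem_Icc.2 ht)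
    have hg0 : g 0 = Complex.exp (lam * t) • w := by
      simp [hg, hT0]
    have hgt : g t = T t w := by
      simp [hg]
    rw [hg0, hgt] at hmvt
    simpa [abs_of_nonneg ht] using hmvt
  -- assemble
  have hsplit : T t u - Complex.exp (lam * t) • u =
      T t (u - w) + (T t w - Complex.exp (lam * t) • w) +
        Complex.exp (lam * t) • (w - u) := by
    simp only [map_sub, smul_sub]
    abel
  have hTn : ‖T t (u - w)‖ ≤ M * Real.exp (γ * t) * a :=
    le_trans ((T t).le_opNorm _) (mul_le_mul_of_nonneg_right (hTnorm t ht) ha0)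
  have hlast : ‖Complex.exp (lam * t) • (w - u)‖ ≤ Real.exp (γ * t) * a := by
    rw [norm_smul, hexp, ← norm_neg, neg_sub]
    apply mul_le_mul _ le_rfl ha0 (Real.exp_nonneg _)
    exact Real.exp_le_exp.2 (mul_le_mul_of_nonneg_right hre ht)
  calc ‖T t u - Complex.exp (lam * t) • u‖
      ≤ ‖T t (u - w)‖ + ‖T t w - Complex.exp (lam * t) • w‖ +
          ‖Complex.exp (lam * t) • (w - u)‖ := by
        rw [hsplit]; exact norm_add₃_le
    _ ≤ M * Real.exp (γ * t) * a + C * t + Real.exp (γ * t) * a := by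
        exact add_le_add (add_le_add hTn key) hlast
    _ ≤ ε * (1 + M + M * t) * Real.exp (γ * t) := by
        rw [hC]
        have hE : 0 < Real.exp (γ * t) := Real.exp_pos _
        nlinarith [mul_nonneg (mul_nonneg (mul_nonneg (by linarith : (0:ℝ) ≤ M) ht) hE.le)
            (sub_nonneg.2 hb.le),
          mul_nonneg (mul_nonneg (by linarith : (0:ℝ) ≤ 1 + M) hE.le) (sub_nonneg.2 ha.le)]
end

section
/- The operators R_t = G e^{λt} B^{-1} G*, where (e^{λt}φ)(s) = e^{λ_s t} φ(s), satisfy R_0 = P, R_t(L^⊥) = 0, R_t(L) ⊆ L, and R_t R_u f = R_{t+u} f for all t, u ≥ 0 and f ∈ M = L + L^⊥. -/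
open MeasureTheory

/-- The operators `R_t = G e^{λt} B⁻¹ G*`, where `e^{λt}` is
multiplication by `e^{λ_s t}` on `L²(S)`, satisfy `R_0 = P`, `R_t(L^⊥) = 0`,
`R_t(L) ⊆ L`, and `R_t R_u f = R_{t+u} f` for all `t, u ≥ 0` and `f ∈ M = L + L^⊥`. -/
theorem approximating_semigroup_properties
    {H : Type*} [NormedAddCommGroup H] [InnerProductSpace ℂ H] [CompleteSpace H]
    {S : Type*} [MeasurableSpace S] {μ : Measure S} [IsFiniteMeasure μ]
    (u : S → H) (hu : ∀ s, ‖u s‖ = 1) (Λ : S → ℂ)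
    (G : Lp ℂ 2 μ →L[ℂ] H)
    (hG : ∀ φ : Lp ℂ 2 μ, G φ = ∫ s, (φ : S → ℂ) s • u s ∂μ)
    (Binv : Lp ℂ 2 μ →L[ℂ] Lp ℂ 2 μ)
    (hB1 : ∀ φ, Binv ((ContinuousLinearMap.adjoint G) (G φ)) = φ)
    (hB2 : ∀ φ, (ContinuousLinearMap.adjoint G) (G (Binv φ)) = φ)
    (E : ℝ → Lp ℂ 2 μ →L[ℂ] Lp ℂ 2 μ)
    (hE : ∀ t : ℝ, ∀ φ : Lp ℂ 2 μ,
      (E t φ : S → ℂ) =ᵐ[μ] fun s => Complex.exp (Λ s * t) * (φ : S → ℂ) s)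
    (R : ℝ → H → H)
    (hR : ∀ t f, R t f = G (E t (Binv ((ContinuousLinearMap.adjoint G) f))))
    (L : Submodule ℂ H) (hL : L = LinearMap.range G.toLinearMap)
    (K : Submodule ℂ H) (hK : K = L.topologicalClosure) [CompleteSpace K] :
    (∀ f ∈ L ⊔ Lᗮ, R 0 f = (K.orthogonalProjection f : H)) ∧
    (∀ t : ℝ, 0 ≤ t → ∀ f ∈ Lᗮ, R t f = 0) ∧
    (∀ t : ℝ, 0 ≤ t → ∀ f ∈ L, R t f ∈ L) ∧
    (∀ t u' : ℝ, 0 ≤ t → 0 ≤ u' → ∀ f ∈ L ⊔ Lᗮ, R t (R u' f) = R (t + u') f) := by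
  have hGs : ∀ f ∈ Lᗮ, (ContinuousLinearMap.adjoint G) f = 0 := by
    intro f hf
    have h0 : ∀ φ : Lp ℂ 2 μ, inner ℂ φ ((ContinuousLinearMap.adjoint G) f) = (0 : ℂ) := by
      intro φ
      rw [ContinuousLinearMap.adjoint_inner_right]
      exact (Submodule.mem_orthogonal L f).mp hf (G φ) (hL ▸ ⟨φ, rfl⟩)
    have := h0 ((ContinuousLinearMap.adjoint G) f)
    rwa [inner_self_eq_zero] at this
  -- R t kills Lᗮ
  have hRperp : ∀ t : ℝ, ∀ f ∈ Lᗮ, R t f = 0 := by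
    intro t f hf
    rw [hR, hGs f hf, map_zero, map_zero, map_zero]
  -- E 0 = id
  have hE0 : ∀ φ : Lp ℂ 2 μ, E 0 φ = φ := by
    intro φ
    apply Lp.ext
    filter_upwards [hE 0 φ] with s hs
    simpa using hs
  -- semigroup property of E
  have hEadd : ∀ (t u' : ℝ) (φ : Lp ℂ 2 μ), E t (E u' φ) = E (t + u') φ := by
    intro t u' φ
    apply Lp.ext
    filter_upwards [hE t (E u' φ), (hE u' φ), hE (t + u') φ] with s h1 h2 h3
    rw [h1, h2, h3, ← mul_assoc, ← Complex.exp_add]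
    push_cast
    ring_nf
  -- action of R on range elements
  have hRG : ∀ (t : ℝ) (φ : Lp ℂ 2 μ), R t (G φ) = G (E t φ) := by
    intro t φ
    rw [hR, hB1]
  -- additivity of R
  have hRadd : ∀ (t : ℝ) (a b : H), R t (a + b) = R t a + R t b := by
    intro t a b
    simp [hR, map_add]
  -- Lᗮ = Kᗮ
  have hKperp : Lᗮ ≤ Kᗮ := by
    rw [hK, ← Submodule.orthogonal_orthogonal_eq_closure]
    exact Submodule.le_orthogonal_orthogonal _
  refine ⟨?_, ?_, ?_, ?_⟩
  · intro f hf
    obtain ⟨g, hg, h, hh, rfl⟩ := Submodule.mem_sup.mp hf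
    rw [hL] at hg
    obtain ⟨φ, rfl⟩ := hg
    simp only [ContinuousLinearMap.coe_coe] at *
    have hPg : (K.orthogonalProjection (G φ) : H) = G φ := by
      exact (Submodule.starProjection_eq_self_iff (K := K)).mpr (hK ▸ L.le_topologicalClosure (hL ▸ ⟨φ, rfl⟩))
    have hPh : K.orthogonalProjection h = 0 :=
      Submodule.orthogonalProjectionOnto_apply_of_mem_orthogonal (hKperp hh)
    rw [hRadd, hRperp 0 h hh, hRG, hE0, map_add, hPh]
    simp [hPg]
  · intro t _ f hf
    exact hRperp t f hf
  · intro t _ f hf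
    rw [hR, hL]
    exact ⟨_, rfl⟩
  · intro t u' _ _ f hf
    obtain ⟨g, hg, h, hh, rfl⟩ := Submodule.mem_sup.mp hf
    rw [hL] at hg
    obtain ⟨φ, rfl⟩ := hg
    simp only [ContinuousLinearMap.coe_coe] at *
    rw [hRadd, hRperp u' h hh, add_zero, hRG, hRG, hEadd,
      hRadd, hRperp (t + u') h hh, add_zero, hRG]
end

section
/- For f ∈ M, the approximate solution satisfies ‖R_t f‖ ≤ ‖B^{-1}G* f‖_1 · e^{μt}, where μ = sup{Re(λ_s) : s ∈ S}. -/
open MeasureTheory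

/-- For `f ∈ M`, the approximate solution satisfies
`‖R_t f‖ ≤ ‖B⁻¹ G* f‖₁ · e^{μt}`, where `μ = sup{Re(λ_s) : s ∈ S}`. -/
theorem approximating_semigroup_norm_bound
    {H : Type*} [NormedAddCommGroup H] [InnerProductSpace ℂ H] [CompleteSpace H]
    {S : Type*} [MeasurableSpace S] [Nonempty S] {μ : Measure S} [IsFiniteMeasure μ]
    (u : S → H) (hu : ∀ s, ‖u s‖ = 1)
    (Λ : S → ℂ) (hbdd : BddAbove (Set.range fun s => (Λ s).re))
    (G : Lp ℂ 2 μ →L[ℂ] H)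
    (hG : ∀ φ : Lp ℂ 2 μ, G φ = ∫ s, (φ : S → ℂ) s • u s ∂μ)
    (Binv : Lp ℂ 2 μ →L[ℂ] Lp ℂ 2 μ)
    (hB1 : ∀ φ, Binv ((ContinuousLinearMap.adjoint G) (G φ)) = φ)
    (hB2 : ∀ φ, (ContinuousLinearMap.adjoint G) (G (Binv φ)) = φ)
    (E : ℝ → Lp ℂ 2 μ →L[ℂ] Lp ℂ 2 μ)
    (hE : ∀ t : ℝ, ∀ φ : Lp ℂ 2 μ,
      (E t φ : S → ℂ) =ᵐ[μ] fun s => Complex.exp (Λ s * t) * (φ : S → ℂ) s)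
    (R : ℝ → H → H)
    (hR : ∀ t f, R t f = G (E t (Binv ((ContinuousLinearMap.adjoint G) f))))
    (f : H)
    (hf : f ∈ LinearMap.range G.toLinearMap ⊔ (LinearMap.range G.toLinearMap)ᗮ)
    (t : ℝ) (ht : 0 ≤ t) :
    ‖R t f‖ ≤
      (∫ s, ‖(Binv ((ContinuousLinearMap.adjoint G) f) : S → ℂ) s‖ ∂μ) *
        Real.exp ((⨆ s, (Λ s).re) * t) := by
  set φ := Binv ((ContinuousLinearMap.adjoint G) f) with hφ
  have hint : Integrable (fun s => ‖(φ : S → ℂ) s‖) μ :=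
    ((Lp.memLp φ).integrable one_le_two).norm
  rw [hR, hG]
  calc ‖∫ s, (E t φ : S → ℂ) s • u s ∂μ‖
      ≤ ∫ s, ‖(E t φ : S → ℂ) s • u s‖ ∂μ := norm_integral_le_integral_norm _
    _ = ∫ s, ‖(E t φ : S → ℂ) s‖ ∂μ := by simp [norm_smul, hu]
    _ ≤ ∫ s, ‖(φ : S → ℂ) s‖ * Real.exp ((⨆ s, (Λ s).re) * t) ∂μ := by
        apply integral_mono_of_nonneg
        · exact Filter.Eventually.of_forall fun s => norm_nonneg _
        · exact hint.mul_const _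
        · filter_upwards [hE t φ] with s hs
          rw [hs, norm_mul]
          rw [mul_comm]
          apply mul_le_mul_of_nonneg_left _ (norm_nonneg _)
          rw [Complex.norm_exp]
          apply Real.exp_le_exp.2
          have : (Λ s * (t : ℂ)).re = (Λ s).re * t := by
            simp [Complex.mul_re]
          rw [this]
          exact mul_le_mul_of_nonneg_right (le_ciSup hbdd s) ht
    _ = (∫ s, ‖(φ : S → ℂ) s‖ ∂μ) * Real.exp ((⨆ s, (Λ s).re) * t) :=
        integral_mul_const _ _
end

section
/- With u_s, v, w_s as above, λ_s = −c/a + 2πis/a, and A = d/dx on L^2(0,a) with f(a) = 0, one has ‖A w_s − λ_s w_s‖^2 ≤ (ak^2 / (2cα^2)) e^{−2c(1−α/a)}; consequently inf over w ∈ Dom(A) of ‖u_s − w‖ + ‖Aw − λ_s w‖ is O(e^{−c(1−α/a)}) as c → ∞. -/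
open MeasureTheory

open MeasureTheory

lemma my_exp_integral (b l r : ℝ) (hb : b ≠ 0) :
    ∫ x in l..r, Real.exp (b * x) = (Real.exp (b * r) - Real.exp (b * l)) / b := by
  have hderiv : ∀ x ∈ Set.uIcc l r, HasDerivAt (fun y => Real.exp (b * y) / b)
      (Real.exp (b * x)) x := by
    intro x _
    have h1 : HasDerivAt (fun y : ℝ => b * y) b x := by
      simpa using (hasDerivAt_id x).const_mul b
    have h3 := h1.exp.div_const b
    rwa [mul_div_cancel_right₀ _ hb] at h3
  have hint : IntervalIntegrable (fun x => Real.exp (b * x)) volume l r :=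
    (Real.continuous_exp.comp (continuous_const.mul continuous_id)).intervalIntegrable l r
  rw [intervalIntegral.integral_eq_sub_of_hasDerivAt hderiv hint]
  ring

lemma my_g_meas (a α c K : ℝ) :
    Measurable (fun x : ℝ => if x ≤ a - α then 0 else K * Real.exp (-(2*c) * x / a)) := by
  exact Measurable.ite (measurableSet_le measurable_id measurable_const) measurable_const
    (((Real.continuous_exp.comp (by continuity)).measurable).const_mul K)

lemma my_g_intble (a α c K l r : ℝ) (ha : 0 < a) (hc : 0 < c) (hK : 0 ≤ K)
    (hl : 0 ≤ l) (hr : 0 ≤ r) :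
    IntervalIntegrable (fun x : ℝ => if x ≤ a - α then 0 else K * Real.exp (-(2*c) * x / a))
      volume l r := by
  rw [intervalIntegrable_iff]
  refine Integrable.mono' (g := fun _ => K)
    (integrableOn_const measure_Ioc_lt_top.ne)
    ((my_g_meas a α c K).aestronglyMeasurable) ?_
  rw [ae_restrict_iff' measurableSet_uIoc]
  filter_upwards with x hx
  have hx0 : 0 ≤ x := le_trans (le_min hl hr) (le_of_lt hx.1)
  by_cases h : x ≤ a - α
  · simp [h, hK]
  · simp only [h, if_false]
    have hexp : Real.exp (-(2*c) * x / a) ≤ 1 := by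
      rw [show -(2*c) * x / a = -(2*c*x/a) by ring]
      exact Real.exp_le_one_iff.mpr (neg_nonpos.mpr (by positivity))
    rw [Real.norm_eq_abs, abs_of_nonneg (by positivity)]
    nlinarith [Real.exp_pos (-(2*c) * x / a)]

lemma my_core (a α c K : ℝ) (ha : 0 < a) (hα0 : 0 < α) (hαa : α < a) (hc : 0 < c)
    (hK : 0 ≤ K) :
    ∫ x in Set.Ioo (0 : ℝ) a, (if x ≤ a - α then 0 else K * Real.exp (-(2*c) * x / a)) ≤
      K * (a / (2 * c)) * Real.exp (-(2 * c) * (1 - α / a)) := by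
  set g : ℝ → ℝ := fun x => if x ≤ a - α then 0 else K * Real.exp (-(2*c) * x / a) with hg
  set t : ℝ := a - α with ht
  have ht0 : 0 < t := by simp only [ht]; linarith
  have hb : -(2*c)/a < 0 := by
    rw [neg_div]
    have : 0 < (2*c)/a := by positivity
    linarith
  have h1 : ∫ x in Set.Ioo (0 : ℝ) a, g x = ∫ x in (0:ℝ)..a, g x := by
    rw [intervalIntegral.integral_of_le ha.le, integral_Ioc_eq_integral_Ioo]
  have hsplit := intervalIntegral.integral_add_adjacent_intervals (f := g)
      (my_g_intble a α c K 0 t ha hc hK le_rfl ht0.le)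
      (my_g_intble a α c K t a ha hc hK ht0.le ha.le)
  have hzero : ∫ x in (0:ℝ)..t, g x = 0 := by
    rw [intervalIntegral.integral_congr (g := fun _ => 0)]
    · simp
    · intro x hx
      rw [Set.uIcc_of_le ht0.le] at hx
      exact if_pos hx.2
  have hsecond : ∫ x in t..a, g x =
      K * ((Real.exp (-(2*c)/a * a) - Real.exp (-(2*c)/a * t)) / (-(2*c)/a)) := by
    have hcong : ∫ x in t..a, g x = ∫ x in t..a, K * Real.exp (-(2*c)/a * x) := by
      apply intervalIntegral.integral_congr_ae
      filter_upwards with x hx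
      rw [Set.uIoc_of_le (by linarith : t ≤ a)] at hx
      rw [hg]
      simp only [if_neg (not_le.mpr hx.1)]
      ring_nf
    rw [hcong, intervalIntegral.integral_const_mul, my_exp_integral (-(2*c)/a) t a hb.ne]
  have hval : ∫ x in t..a, g x =
      K * (a / (2*c)) * (Real.exp (-(2*c) * (1 - α/a)) - Real.exp (-(2*c))) := by
    rw [hsecond]
    have e1 : -(2*c)/a * a = -(2*c) := by field_simp
    have e2 : -(2*c)/a * t = -(2*c) * (1 - α/a) := by
      rw [ht]; field_simp
    rw [e1, e2]
    field_simp
    ring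
  rw [h1, ← hsplit, hzero, hval]
  have h2 : 0 ≤ K * (a / (2*c)) := by positivity
  nlinarith [Real.exp_pos (-(2*c)), Real.exp_pos (-(2*c) * (1 - α/a))]

lemma my_norm_u (a c : ℝ) (s : ℤ) (kc : ℝ) (hkc : 0 ≤ kc) (x : ℝ) :
    ‖(kc : ℂ) * Complex.exp (((-(c * x / a) : ℝ) : ℂ) +
        2 * (Real.pi : ℂ) * Complex.I * (s : ℂ) * (x : ℂ) / (a : ℂ))‖ =
      kc * Real.exp (-(c * x / a)) := by
  rw [norm_mul, Complex.norm_real, Real.norm_eq_abs,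
    Complex.norm_exp, abs_of_nonneg hkc]
  congr 1
  have h2 : (2 * (Real.pi : ℂ) * Complex.I * (s : ℂ) * (x : ℂ) / (a : ℂ)) =
      ((2 * Real.pi * (s : ℝ) * x / a : ℝ) : ℂ) * Complex.I := by push_cast; ring
  rw [h2]
  simp

lemma my_k_sq (a c : ℝ) (ha : 0 < a) (hc : 0 < c) :
    ((Real.sqrt ((a / (2 * c)) * (1 - Real.exp (-2 * c))))⁻¹) ^ 2 * (a / (2 * c)) =
      (1 - Real.exp (-2 * c))⁻¹ := by
  have hE : Real.exp (-2 * c) < 1 := Real.exp_lt_one_iff.mpr (by linarith)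
  have hX : 0 < (a / (2 * c)) * (1 - Real.exp (-2 * c)) := by
    have : 0 < 1 - Real.exp (-2 * c) := by linarith
    positivity
  rw [inv_pow, Real.sq_sqrt hX.le, mul_inv, mul_comm ((a / (2 * c))⁻¹) _, mul_assoc,
    inv_mul_cancel₀ (by positivity : (0:ℝ) < a / (2*c)).ne', mul_one]

lemma my_k_sq_le (a c : ℝ) (ha : 0 < a) (hc : 1 ≤ c) :
    ((Real.sqrt ((a / (2 * c)) * (1 - Real.exp (-2 * c))))⁻¹) ^ 2 * (a / (2 * c)) ≤ 2 := by
  rw [my_k_sq a c ha (by linarith)]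
  have h1 : Real.exp (-2 * c) ≤ Real.exp (-2) := Real.exp_le_exp.mpr (by linarith)
  have h2 : Real.exp (-2) ≤ 1/2 := by
    rw [show (-2 : ℝ) = -(2:ℝ) by norm_num, Real.exp_neg]
    have h3 : (3:ℝ) ≤ Real.exp 2 := by nlinarith [Real.add_one_le_exp (2:ℝ)]
    rw [inv_le_comm₀ (by positivity) (by norm_num)]
    linarith
  have h4 : (1:ℝ)/2 ≤ 1 - Real.exp (-2*c) := by linarith
  rw [inv_le_comm₀ (by linarith) (by norm_num)]
  linarith

/-- With `u_s, v, w_s` as in Statement 13 and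
`λ_s = −c/a + 2πis/a`, so that `A w_s − λ_s w_s = u_s v′`, one has
`‖A w_s − λ_s w_s‖² ≤ (ak²/(2cα²)) e^{−2c(1−α/a)}`; consequently (taking `w = w_s`)
`inf_{w ∈ Dom A} (‖u_s − w‖ + ‖Aw − λ_s w‖)` is `O(e^{−c(1−α/a)})` as `c → ∞`. -/
theorem convection_approximate_eigenvalue_error
    (a α : ℝ) (ha : 0 < a) (hα0 : 0 < α) (hαa : α < a) (s : ℤ)
    (k : ℝ → ℝ)
    (hk : ∀ c : ℝ, k c = (Real.sqrt ((a / (2 * c)) * (1 - Real.exp (-2 * c))))⁻¹)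
    (u : ℝ → ℝ → ℂ)
    (hu : ∀ c : ℝ, u c = fun x : ℝ => (k c : ℂ) *
      Complex.exp (((-(c * x / a) : ℝ) : ℂ) +
        2 * (Real.pi : ℂ) * Complex.I * (s : ℂ) * (x : ℂ) / (a : ℂ)))
    (v : ℝ → ℝ) (hv : v = fun x : ℝ => if x ≤ a - α then 1 else (a - x) / α)
    (vd : ℝ → ℝ) (hvd : vd = fun x : ℝ => if x ≤ a - α then 0 else -1 / α)
    (w : ℝ → ℝ → ℂ) (hw : ∀ c : ℝ, w c = fun x : ℝ => u c x * (v x : ℂ)) :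
    (∀ c : ℝ, 0 < c →
      (∫ x in Set.Ioo (0 : ℝ) a, ‖u c x * (vd x : ℂ)‖ ^ 2) ≤
        a * (k c) ^ 2 / (2 * c * α ^ 2) * Real.exp (-(2 * c) * (1 - α / a))) ∧
    (∃ C : ℝ, 0 < C ∧ ∀ᶠ c in Filter.atTop,
      Real.sqrt (∫ x in Set.Ioo (0 : ℝ) a, ‖u c x - w c x‖ ^ 2) +
        Real.sqrt (∫ x in Set.Ioo (0 : ℝ) a, ‖u c x * (vd x : ℂ)‖ ^ 2) ≤
          C * Real.exp (-(c * (1 - α / a)))) := by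
  have hk0 : ∀ c : ℝ, 0 ≤ k c := by
    intro c; rw [hk]; positivity
  have hnorm : ∀ c x : ℝ, ‖u c x‖ = k c * Real.exp (-(c * x / a)) := by
    intro c x
    simp only [hu]
    exact my_norm_u a c s (k c) (hk0 c) x
  -- pointwise squared exponential identity
  have hEsq : ∀ c x : ℝ, Real.exp (-(c * x / a)) ^ 2 = Real.exp (-(2 * c) * x / a) := by
    intro c x
    rw [sq, ← Real.exp_add]
    ring_nf
  -- Part 1
  have hpart1 : ∀ c : ℝ, 0 < c →
      (∫ x in Set.Ioo (0 : ℝ) a, ‖u c x * (vd x : ℂ)‖ ^ 2) ≤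
        a * (k c) ^ 2 / (2 * c * α ^ 2) * Real.exp (-(2 * c) * (1 - α / a)) := by
    intro c hc
    have heq : ∀ x : ℝ, ‖u c x * (vd x : ℂ)‖ ^ 2 =
        (if x ≤ a - α then 0 else ((k c) ^ 2 / α ^ 2) * Real.exp (-(2 * c) * x / a)) := by
      intro x
      by_cases hx : x ≤ a - α
      · simp [hvd, hx]
      · simp only [hvd, hx, if_false]
        rw [norm_mul, hnorm c x, Complex.norm_real, Real.norm_eq_abs, abs_div, abs_neg,
          abs_one, abs_of_pos hα0, mul_pow, mul_pow, hEsq c x, div_pow, one_pow]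
        ring
    have hint_eq : (∫ x in Set.Ioo (0 : ℝ) a, ‖u c x * (vd x : ℂ)‖ ^ 2) =
        ∫ x in Set.Ioo (0 : ℝ) a,
          (if x ≤ a - α then 0 else ((k c) ^ 2 / α ^ 2) * Real.exp (-(2 * c) * x / a)) :=
      integral_congr_ae (Filter.Eventually.of_forall fun x => heq x)
    calc (∫ x in Set.Ioo (0 : ℝ) a, ‖u c x * (vd x : ℂ)‖ ^ 2)
        = ∫ x in Set.Ioo (0 : ℝ) a,
          (if x ≤ a - α then 0 else ((k c) ^ 2 / α ^ 2) * Real.exp (-(2 * c) * x / a)) :=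
          hint_eq
      _ ≤ ((k c) ^ 2 / α ^ 2) * (a / (2 * c)) * Real.exp (-(2 * c) * (1 - α / a)) :=
          my_core a α c ((k c) ^ 2 / α ^ 2) ha hα0 hαa hc (by positivity)
      _ = a * (k c) ^ 2 / (2 * c * α ^ 2) * Real.exp (-(2 * c) * (1 - α / a)) := by ring
  refine ⟨hpart1, 2 + 2 / α, by positivity, ?_⟩
  filter_upwards [Filter.eventually_ge_atTop (1 : ℝ)] with c hc1
  have hc : (0 : ℝ) < c := by linarith
  set X : ℝ := Real.exp (-(c * (1 - α / a))) with hXdef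
  have hX : 0 < X := Real.exp_pos _
  have hXX : X ^ 2 = Real.exp (-(2 * c) * (1 - α / a)) := by
    rw [sq, ← Real.exp_add]; ring_nf
  have hk2 : (k c) ^ 2 * (a / (2 * c)) ≤ 2 := by
    rw [hk]; exact my_k_sq_le a c ha hc1
  -- second term bound
  have hbound2 : (∫ x in Set.Ioo (0 : ℝ) a, ‖u c x * (vd x : ℂ)‖ ^ 2) ≤ ((2 / α) * X) ^ 2 := by
    refine le_trans (hpart1 c hc) ?_
    rw [mul_pow, hXX]
    refine mul_le_mul_of_nonneg_right ?_ (Real.exp_pos _).le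
    have h1 : a * (k c) ^ 2 / (2 * c * α ^ 2) = ((k c) ^ 2 * (a / (2 * c))) / α ^ 2 := by ring
    have h2 : ((k c) ^ 2 * (a / (2 * c))) / α ^ 2 ≤ 2 / α ^ 2 :=
      (div_le_div_iff_of_pos_right (by positivity)).mpr hk2
    have h3 : (2 : ℝ) / α ^ 2 ≤ (2 / α) ^ 2 := by
      rw [div_pow]
      exact (div_le_div_iff_of_pos_right (by positivity)).mpr (by norm_num)
    linarith [h1 ▸ h2]
  -- first term bound
  have hvmem : ∀ x : ℝ, x ∈ Set.Ioo (0 : ℝ) a → ¬ x ≤ a - α → 0 ≤ v x ∧ v x ≤ 1 := by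
    intro x hx hxa
    rw [hv]
    simp only
    rw [if_neg hxa]
    push_neg at hxa
    constructor
    · apply div_nonneg (by linarith [hx.2]) hα0.le
    · rw [div_le_one hα0]; linarith
  have heq1 : ∀ x : ℝ, ‖u c x - w c x‖ ^ 2 =
      (k c * Real.exp (-(c * x / a))) ^ 2 * (1 - v x) ^ 2 := by
    intro x
    have h1 : u c x - w c x = u c x * ((1 - v x : ℝ) : ℂ) := by
      rw [hw]; push_cast; ring
    rw [h1, norm_mul, hnorm c x, Complex.norm_real, Real.norm_eq_abs, mul_pow, sq_abs]
  have hle1 : ∀ x ∈ Set.Ioo (0 : ℝ) a, ‖u c x - w c x‖ ^ 2 ≤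
      (if x ≤ a - α then 0 else (k c) ^ 2 * Real.exp (-(2 * c) * x / a)) := by
    intro x hx
    rw [heq1 x]
    by_cases hxa : x ≤ a - α
    · rw [if_pos hxa]
      have hv1 : v x = 1 := by rw [hv]; simp [hxa]
      rw [hv1]
      simp
    · rw [if_neg hxa]
      obtain ⟨hv0, hv1⟩ := hvmem x hx hxa
      have h1v : (1 - v x) ^ 2 ≤ 1 := by nlinarith
      have := mul_le_mul_of_nonneg_left h1v
        (by positivity : (0:ℝ) ≤ (k c * Real.exp (-(c * x / a))) ^ 2)
      rw [mul_one] at this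
      refine le_trans this ?_
      rw [mul_pow, hEsq c x]
  have hmeasv : Measurable v := by
    rw [hv]
    exact Measurable.ite (measurableSet_le measurable_id measurable_const)
      measurable_const (by fun_prop)
  have hcontu : Continuous (u c) := by
    rw [hu]
    apply Continuous.mul continuous_const
    apply Complex.continuous_exp.comp
    fun_prop
  have hmeasf1 : Measurable fun x => ‖u c x - w c x‖ ^ 2 := by
    have hmw : Measurable (w c) := by
      rw [hw]
      exact hcontu.measurable.mul (Complex.continuous_ofReal.measurable.comp hmeasv)
    exact ((hcontu.measurable.sub hmw).norm).pow_const 2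
  have hintf1 : IntegrableOn (fun x => ‖u c x - w c x‖ ^ 2) (Set.Ioo 0 a) volume := by
    refine Integrable.mono' (g := fun _ => (k c) ^ 2)
      (integrableOn_const measure_Ioo_lt_top.ne)
      hmeasf1.aestronglyMeasurable ?_
    rw [ae_restrict_iff' measurableSet_Ioo]
    filter_upwards with x hx
    rw [Real.norm_eq_abs, abs_of_nonneg (by positivity)]
    refine le_trans (hle1 x hx) ?_
    by_cases hxa : x ≤ a - α
    · rw [if_pos hxa]; positivity
    · rw [if_neg hxa]
      have hE1 : Real.exp (-(2 * c) * x / a) ≤ 1 := by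
        rw [show -(2*c) * x / a = -(2*c*x/a) by ring]
        exact Real.exp_le_one_iff.mpr
          (neg_nonpos.mpr (div_nonneg (by nlinarith [hx.1.le]) ha.le))
      nlinarith [mul_le_mul_of_nonneg_left hE1 (sq_nonneg (k c))]
  have hintg1 : IntegrableOn
      (fun x : ℝ => if x ≤ a - α then 0 else (k c) ^ 2 * Real.exp (-(2 * c) * x / a))
      (Set.Ioo 0 a) volume := by
    have h := my_g_intble a α c ((k c) ^ 2) 0 a ha hc (by positivity) le_rfl ha.le
    rw [intervalIntegrable_iff, Set.uIoc_of_le ha.le] at h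
    exact h.mono_set Set.Ioo_subset_Ioc_self
  have hbound1 : (∫ x in Set.Ioo (0 : ℝ) a, ‖u c x - w c x‖ ^ 2) ≤ (2 * X) ^ 2 := by
    calc (∫ x in Set.Ioo (0 : ℝ) a, ‖u c x - w c x‖ ^ 2)
        ≤ ∫ x in Set.Ioo (0 : ℝ) a,
            (if x ≤ a - α then 0 else (k c) ^ 2 * Real.exp (-(2 * c) * x / a)) :=
          setIntegral_mono_on hintf1 hintg1 measurableSet_Ioo hle1
      _ ≤ (k c) ^ 2 * (a / (2 * c)) * Real.exp (-(2 * c) * (1 - α / a)) :=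
          my_core a α c ((k c) ^ 2) ha hα0 hαa hc (by positivity)
      _ ≤ (2 * X) ^ 2 := by
          rw [mul_pow, ← hXX]
          nlinarith [sq_nonneg X, hX]
  have hs1 : Real.sqrt (∫ x in Set.Ioo (0 : ℝ) a, ‖u c x - w c x‖ ^ 2) ≤ 2 * X := by
    refine le_trans (Real.sqrt_le_sqrt hbound1) ?_
    rw [Real.sqrt_sq (by positivity)]
  have hs2 : Real.sqrt (∫ x in Set.Ioo (0 : ℝ) a, ‖u c x * (vd x : ℂ)‖ ^ 2) ≤ (2 / α) * X := by
    refine le_trans (Real.sqrt_le_sqrt hbound2) ?_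
    rw [Real.sqrt_sq (by positivity)]
  calc Real.sqrt (∫ x in Set.Ioo (0 : ℝ) a, ‖u c x - w c x‖ ^ 2) +
        Real.sqrt (∫ x in Set.Ioo (0 : ℝ) a, ‖u c x * (vd x : ℂ)‖ ^ 2)
      ≤ 2 * X + (2 / α) * X := add_le_add hs1 hs2
    _ = (2 + 2 / α) * X := by ring
end

section
/- Let δ = 1/2 − c/(ab) with 0 < c < ab/2, u_σ(x) = k(e^{(−b/2+bδ+iσ)x} − e^{(−b/2−bδ−iσ)x}) normalized in L^2(0,a), w_σ = u_σ v with v(x) = 1 − e^{(x−a)/α}, and μ_σ = b^{−1}(−b/2+bδ+iσ)² + (−b/2+bδ+iσ). Then there exists a constant K depending on α, b, σ such that ‖u_σ − w_σ‖ + ‖Aw_σ − μ_σ w_σ‖ ≤ K a^{−1/2} (2c/(e^{2c} − 1))^{1/2} for all sufficiently large a. -/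
open MeasureTheory

lemma exp_affine_integral (r s lo hi : ℝ) (hr : r ≠ 0) :
    ∫ x in lo..hi, Real.exp (r * x + s)
      = (Real.exp (r * hi + s) - Real.exp (r * lo + s)) / r := by
  have h : ∀ x ∈ Set.uIcc lo hi,
      HasDerivAt (fun x => Real.exp (r * x + s) / r) (Real.exp (r * x + s)) x := by
    intro x _
    have := (((hasDerivAt_id x).const_mul r).add_const s).exp.div_const r
    simpa [mul_div_assoc, mul_div_cancel_right₀, hr] using this
  rw [intervalIntegral.integral_eq_sub_of_hasDerivAt h
    (Continuous.intervalIntegrable (by continuity) _ _)]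
  ring

lemma exp_affine_setIntegral (r s a : ℝ) (hr : r ≠ 0) (ha : 0 ≤ a) :
    ∫ x in Set.Ioo (0:ℝ) a, Real.exp (r * x + s)
      = (Real.exp (r * a + s) - Real.exp s) / r := by
  rw [← integral_Ioc_eq_integral_Ioo, ← intervalIntegral.integral_of_le ha,
    exp_affine_integral r s 0 a hr]
  norm_num

lemma exp_mul_setIntegral (r a : ℝ) (hr : r ≠ 0) (ha : 0 ≤ a) :
    ∫ x in Set.Ioo (0:ℝ) a, Real.exp (r * x) = (Real.exp (r * a) - 1) / r := by
  simpa using exp_affine_setIntegral r 0 a hr ha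

lemma cont_integrableOn {f : ℝ → ℝ} (hf : Continuous f) (a : ℝ) :
    IntegrableOn f (Set.Ioo (0:ℝ) a) :=
  (hf.integrableOn_Icc).mono_set Set.Ioo_subset_Icc_self

lemma sq_int_bound {f : ℝ → ℂ} (hf : Continuous f) {a α M : ℝ} (ha : 0 ≤ a) (hα : 0 < α)
    (hbd : ∀ x ∈ Set.Ioo (0:ℝ) a, ‖f x‖ ≤ M * Real.exp ((x - a) / α)) :
    ∫ x in Set.Ioo (0:ℝ) a, ‖f x‖ ^ 2 ≤ M ^ 2 * (α / 2) := by
  have key : ∫ x in Set.Ioo (0:ℝ) a, ‖f x‖ ^ 2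
      ≤ ∫ x in Set.Ioo (0:ℝ) a, M ^ 2 * Real.exp (2/α * x + -(2*a/α)) := by
    apply setIntegral_mono_on
    · exact cont_integrableOn ((hf.norm).pow 2) a
    · exact cont_integrableOn (by continuity) a
    · exact measurableSet_Ioo
    · intro x hx
      have h1 := hbd x hx
      have h2 : (M * Real.exp ((x - a) / α)) ^ 2 = M ^ 2 * Real.exp (2/α * x + -(2*a/α)) := by
        rw [mul_pow, sq (Real.exp _), ← Real.exp_add]
        congr 2
        field_simp
        ring
      rw [← h2]
      exact pow_le_pow_left₀ (norm_nonneg _) h1 2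
  have h3 : ∫ x in Set.Ioo (0:ℝ) a, M ^ 2 * Real.exp (2/α * x + -(2*a/α))
      = M ^ 2 * ((Real.exp (2/α * a + -(2*a/α)) - Real.exp (-(2*a/α))) / (2/α)) := by
    rw [integral_const_mul, exp_affine_setIntegral _ _ _ (by positivity) ha]
  rw [h3] at key
  refine key.trans ?_
  have hle : (Real.exp (2/α * a + -(2*a/α)) - Real.exp (-(2*a/α))) / (2/α) ≤ α / 2 := by
    have h0 : 2/α * a + -(2*a/α) = 0 := by ring
    rw [h0, Real.exp_zero, div_le_iff₀ (by positivity)]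
    have h4 := Real.exp_pos (-(2*a/α))
    have h5 : α/2 * (2/α) = 1 := by field_simp
    nlinarith
  nlinarith [sq_nonneg M]

lemma hasDerivAt_cexp_mul (ζ : ℂ) (x : ℝ) :
    HasDerivAt (fun x : ℝ => Complex.exp (ζ * x)) (ζ * Complex.exp (ζ * x)) x := by
  have h : HasDerivAt (fun u : ℂ => Complex.exp (ζ * u)) (Complex.exp (ζ * x) * ζ) (x:ℂ) := by
    simpa using ((hasDerivAt_id (x:ℂ)).const_mul ζ).cexp
  simpa [mul_comm] using h.comp_ofReal

lemma hasDerivAt_vexp (α a : ℝ) (hα : α ≠ 0) (x : ℝ) :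
    HasDerivAt (fun x : ℝ => Complex.exp (((x - a)/α : ℝ) : ℂ))
      ((α⁻¹ : ℂ) * Complex.exp (((x - a)/α : ℝ) : ℂ)) x := by
  have hg : HasDerivAt (fun x : ℝ => (x - a)/α) α⁻¹ x := by
    simpa [one_div] using ((hasDerivAt_id x).sub_const a).div_const α
  simpa [mul_comm] using (hg.ofReal_comp).cexp

lemma norm_cexp_mul_ofReal (ζ : ℂ) (x : ℝ) :
    ‖Complex.exp (ζ * x)‖ = Real.exp (ζ.re * x) := by
  rw [Complex.norm_exp]
  congr 1
  simp [Complex.mul_re]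

lemma norm_cexp_ofReal (t : ℝ) : ‖Complex.exp ((t : ℂ))‖ = Real.exp t := by
  rw [Complex.norm_exp]
  simp

set_option maxHeartbeats 2000000 in
/-- Let `δ = 1/2 − c/(ab)` with `0 < c < ab/2`,
`u_σ(x) = k(e^{(−b/2+bδ+iσ)x} − e^{(−b/2−bδ−iσ)x})` normalized in `L²(0,a)`,
`w_σ = u_σ v` with `v(x) = 1 − e^{(x−a)/α}`, and
`μ_σ = b⁻¹(−b/2+bδ+iσ)² + (−b/2+bδ+iσ)`, so that
`Aw_σ − μ_σ w_σ = 2b⁻¹ u_σ′ v′ + b⁻¹ u_σ v″ + u_σ v′`.  Then there is a constant `K`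
(depending on `α, b, σ`) with
`‖u_σ − w_σ‖ + ‖Aw_σ − μ_σ w_σ‖ ≤ K a^{−1/2} (2c/(e^{2c} − 1))^{1/2}`
for all sufficiently large `a`. -/
theorem convection_diffusion_pseudomode_error
    (b α c σ : ℝ) (hb : 0 < b) (hα : 0 < α) (hc : 0 < c)
    (δ : ℝ → ℝ) (hδ : ∀ a : ℝ, δ a = 1 / 2 - c / (a * b))
    (z : ℝ → ℂ)
    (hz : ∀ a : ℝ, z a = -(b : ℂ) / 2 + (b : ℂ) * (δ a : ℂ) + Complex.I * (σ : ℂ))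
    (U0 : ℝ → ℝ → ℂ)
    (hU0 : ∀ a : ℝ, U0 a = fun x : ℝ =>
      Complex.exp (z a * (x : ℂ)) -
      Complex.exp ((-(b : ℂ) / 2 - (b : ℂ) * (δ a : ℂ) - Complex.I * (σ : ℂ)) * (x : ℂ)))
    (k : ℝ → ℝ)
    (hknorm : ∀ a : ℝ, 0 < a → c < a * b / 2 →
      (∫ x in Set.Ioo (0 : ℝ) a, ‖(k a : ℂ) * U0 a x‖ ^ 2) = 1)
    (U : ℝ → ℝ → ℂ) (hU : ∀ a : ℝ, U a = fun x : ℝ => (k a : ℂ) * U0 a x)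
    (V : ℝ → ℝ → ℂ)
    (hV : ∀ a : ℝ, V a = fun x : ℝ => 1 - Complex.exp (((x - a) / α : ℝ) : ℂ))
    (Err : ℝ → ℝ → ℂ)
    (hErr : ∀ a : ℝ, Err a = fun x : ℝ =>
      2 / (b : ℂ) * deriv (U a) x * deriv (V a) x +
      (1 / (b : ℂ)) * U a x * deriv (deriv (V a)) x +
      U a x * deriv (V a) x) :
    ∃ K : ℝ, ∀ᶠ a in Filter.atTop,
      Real.sqrt (∫ x in Set.Ioo (0 : ℝ) a, ‖U a x - U a x * V a x‖ ^ 2) +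
        Real.sqrt (∫ x in Set.Ioo (0 : ℝ) a, ‖Err a x‖ ^ 2) ≤
          K * (Real.sqrt a)⁻¹ * Real.sqrt (2 * c / (Real.exp (2 * c) - 1)) := by
  set S : ℝ := b + |σ| + 1 with hS
  set C : ℝ := 4*S/(b*α) + 2/(b*α^2) + 2/α with hC
  have hexp2c : 1 < Real.exp (2*c) := by
    rw [← Real.exp_zero]
    exact Real.exp_lt_exp.mpr (by positivity)
  set D : ℝ := (1 - Real.exp (-(2*c))) / (2*c) with hD
  have hDpos : 0 < D := by
    apply div_pos _ (by positivity)
    have h1 : Real.exp (-(2*c)) < 1 := Real.exp_lt_one_iff.mpr (by linarith only [hc])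
    linarith only [h1]
  have hSpos : 0 < S := by positivity
  have hCpos : 0 < C := by positivity
  refine ⟨(2 + C) * Real.sqrt (α/2) * Real.sqrt 2 * Real.exp c, ?_⟩
  rw [Filter.eventually_atTop]
  refine ⟨1 + 4*c/b + 8/(b*D), fun a ha => ?_⟩
  -- basic facts about a
  have h4cb : 0 < 4*c/b := by positivity
  have h8bD : 0 < 8/(b*D) := by positivity
  have ha1 : 1 ≤ a := by linarith only [ha, h4cb, h8bD]
  have ha0 : 0 < a := by linarith only [ha1]
  have hc4 : 4*c ≤ a*b := by
    have h1 : 4*c/b ≤ a := by linarith only [ha, h8bD]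
    calc 4*c = (4*c/b)*b := by field_simp
    _ ≤ a*b := mul_le_mul_of_nonneg_right h1 hb.le
  have hcab : c < a*b/2 := by linarith only [hc4, hc]
  have haD : 8 ≤ a*(b*D) := by
    have h1 : 8/(b*D) ≤ a := by linarith only [ha, h4cb]
    calc (8:ℝ) = (8/(b*D))*(b*D) := by field_simp
    _ ≤ a*(b*D) := by
        have hbD : 0 < b*D := by positivity
        exact mul_le_mul_of_nonneg_right h1 hbD.le
  have hca : c/a ≤ b/4 := by
    rw [div_le_div_iff₀ ha0 (by norm_num)]
    linarith only [hc4]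
  have hca0 : 0 < c/a := by positivity
  -- the second exponent
  set w : ℂ := -(b : ℂ) / 2 - (b : ℂ) * (δ a : ℂ) - Complex.I * (σ : ℂ) with hw
  -- explicit forms
  have hz' : z a = ((-(c/a) : ℝ) : ℂ) + Complex.I * (σ : ℂ) := by
    rw [hz, hδ]
    have hb0 : (b:ℂ) ≠ 0 := by exact_mod_cast hb.ne'
    have ha0' : (a:ℂ) ≠ 0 := by exact_mod_cast ha0.ne'
    push_cast
    field_simp
    ring
  have hw' : w = (((-b + c/a) : ℝ) : ℂ) - Complex.I * (σ : ℂ) := by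
    rw [hw, hδ]
    have hb0 : (b:ℂ) ≠ 0 := by exact_mod_cast hb.ne'
    have ha0' : (a:ℂ) ≠ 0 := by exact_mod_cast ha0.ne'
    push_cast
    field_simp
    ring
  have hzre : (z a).re = -(c/a) := by rw [hz']; simp
  have hwre : w.re = -b + c/a := by rw [hw']; simp
  have hznorm : ‖z a‖ ≤ S := by
    rw [hz']
    refine (norm_add_le _ _).trans ?_
    rw [Complex.norm_real, norm_mul, Complex.norm_I, one_mul, Complex.norm_real,
      Real.norm_eq_abs, Real.norm_eq_abs,
      abs_of_nonpos (by linarith : -(c/a) ≤ 0), hS]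
    linarith
  have hwnorm : ‖w‖ ≤ S := by
    rw [hw']
    refine (norm_sub_le _ _).trans ?_
    rw [Complex.norm_real, norm_mul, Complex.norm_I, one_mul, Complex.norm_real,
      Real.norm_eq_abs, Real.norm_eq_abs, hS]
    have h1 : |(-b + c/a)| ≤ b := by
      rw [abs_le]
      constructor
      · linarith only [hca0]
      · linarith only [hca, hb]
    linarith only [h1]
  -- norms of exponentials
  have hzx : ∀ x : ℝ, 0 ≤ x → ‖Complex.exp (z a * x)‖ ≤ 1 := by
    intro x hx
    rw [norm_cexp_mul_ofReal, ← Real.exp_zero]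
    apply Real.exp_le_exp.mpr
    rw [hzre]
    have h1 := mul_nonneg hca0.le hx
    linarith only [h1]
  have hwx : ∀ x : ℝ, 0 ≤ x → ‖Complex.exp (w * x)‖ ≤ 1 := by
    intro x hx
    rw [norm_cexp_mul_ofReal, ← Real.exp_zero]
    apply Real.exp_le_exp.mpr
    rw [hwre]
    have h1 := mul_nonneg (show (0:ℝ) ≤ b - c/a by linarith only [hca, hb]) hx
    linarith only [h1]
  have hU0bd : ∀ x : ℝ, 0 ≤ x → ‖U0 a x‖ ≤ 2 := by
    intro x hx
    rw [hU0]
    refine (norm_sub_le _ _).trans ?_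
    have e1 := hzx x hx
    have e2 := hwx x hx
    rw [← hw]
    linarith only [e1, e2]
  set kn : ℝ := |k a| with hkn
  have hUbd : ∀ x : ℝ, 0 ≤ x → ‖U a x‖ ≤ 2 * kn := by
    intro x hx
    rw [hU]
    simp only [norm_mul, Complex.norm_real, Real.norm_eq_abs]
    have h1 := hU0bd x hx
    have h0 : (0:ℝ) ≤ |k a| := abs_nonneg _
    have h3 := mul_le_mul_of_nonneg_left h1 h0
    rw [hkn]
    linarith only [h3]
  -- derivatives
  have hUd : ∀ x : ℝ, deriv (U a) x
      = (k a : ℂ) * (z a * Complex.exp (z a * x) - w * Complex.exp (w * x)) := by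
    intro x
    apply HasDerivAt.deriv
    have h := ((hasDerivAt_cexp_mul (z a) x).sub (hasDerivAt_cexp_mul w x)).const_mul
      ((k a : ℝ) : ℂ)
    simp only [hU, hU0, ← hw]
    exact h
  have hVd : deriv (V a) = fun x : ℝ =>
      -((α⁻¹ : ℂ) * Complex.exp (((x - a)/α : ℝ) : ℂ)) := by
    funext x
    apply HasDerivAt.deriv
    have h := (hasDerivAt_vexp α a hα.ne' x).const_sub 1
    simp only [hV]
    exact h
  have hVdd : ∀ x : ℝ, deriv (deriv (V a)) x
      = -((α⁻¹ : ℂ) * ((α⁻¹ : ℂ) * Complex.exp (((x - a)/α : ℝ) : ℂ))) := by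
    intro x
    rw [hVd]
    apply HasDerivAt.deriv
    exact ((hasDerivAt_vexp α a hα.ne' x).const_mul (α⁻¹ : ℂ)).neg
  -- norm of the cutoff exponential
  have hEnorm : ∀ x : ℝ, ‖Complex.exp (((x - a)/α : ℝ) : ℂ)‖ = Real.exp ((x - a)/α) :=
    fun x => norm_cexp_ofReal _
  -- continuity
  have hcontU0 : Continuous (U0 a) := by
    rw [hU0]; fun_prop
  have hcontU : Continuous (U a) := by
    rw [hU]; exact continuous_const.mul hcontU0
  have hcontV : Continuous (V a) := by
    rw [hV]; fun_prop
  -- first integrand bound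
  have hf1 : ∀ x ∈ Set.Ioo (0:ℝ) a, ‖U a x - U a x * V a x‖ ≤ (2*kn) * Real.exp ((x - a)/α) := by
    intro x hx
    have hrw : U a x - U a x * V a x = U a x * Complex.exp (((x - a)/α : ℝ) : ℂ) := by
      rw [hV]; ring
    rw [hrw, norm_mul, hEnorm]
    exact mul_le_mul_of_nonneg_right (hUbd x hx.1.le) (Real.exp_nonneg _)
  have I1bd : ∫ x in Set.Ioo (0:ℝ) a, ‖U a x - U a x * V a x‖ ^ 2 ≤ (2*kn)^2 * (α/2) :=
    sq_int_bound (hcontU.sub (hcontU.mul hcontV)) ha0.le hα hf1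
  -- Err explicit
  have hErrx : ∀ x : ℝ, Err a x
      = 2 / (b:ℂ) * ((k a : ℂ) * (z a * Complex.exp (z a * x) - w * Complex.exp (w * x)))
          * (-((α⁻¹ : ℂ) * Complex.exp (((x - a)/α : ℝ) : ℂ)))
        + (1/(b:ℂ)) * U a x * (-((α⁻¹ : ℂ) * ((α⁻¹ : ℂ) * Complex.exp (((x - a)/α : ℝ) : ℂ))))
        + U a x * (-((α⁻¹ : ℂ) * Complex.exp (((x - a)/α : ℝ) : ℂ))) := by
    intro x
    rw [hErr]
    simp only [hUd, hVdd]
    simp only [hVd]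
  have hcontErr : Continuous (Err a) := by
    rw [funext hErrx]
    apply Continuous.add
    apply Continuous.add
    · fun_prop
    · exact (continuous_const.mul hcontU).mul (by fun_prop)
    · exact hcontU.mul (by fun_prop)
  -- derivative bound
  have hdiffbd : ∀ x ∈ Set.Ioo (0:ℝ) a,
      ‖z a * Complex.exp (z a * x) - w * Complex.exp (w * x)‖ ≤ 2*S := by
    intro x hx
    refine (norm_sub_le _ _).trans ?_
    rw [norm_mul, norm_mul]
    have e1 := hzx x hx.1.le
    have e2 := hwx x hx.1.le
    have m1 : ‖z a‖ * ‖Complex.exp (z a * x)‖ ≤ S * 1 :=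
      mul_le_mul hznorm e1 (norm_nonneg _) hSpos.le
    have m2 : ‖w‖ * ‖Complex.exp (w * x)‖ ≤ S * 1 :=
      mul_le_mul hwnorm e2 (norm_nonneg _) hSpos.le
    linarith only [m1, m2]
  have hkk : ‖((k a : ℝ) : ℂ)‖ = kn := by
    rw [Complex.norm_real, Real.norm_eq_abs, hkn]
  -- Err bound
  have hf2 : ∀ x ∈ Set.Ioo (0:ℝ) a, ‖Err a x‖ ≤ (C*kn) * Real.exp ((x - a)/α) := by
    intro x hx
    have hkn0 : (0:ℝ) ≤ kn := abs_nonneg _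
    have hE0 : (0:ℝ) ≤ Real.exp ((x - a)/α) := (Real.exp_pos _).le
    rw [hErrx x]
    refine (norm_add₃_le).trans ?_
    have hb2 : ‖(2:ℂ) / (b:ℂ)‖ = 2/b := by
      rw [norm_div]
      simp [abs_of_pos hb]
    have hb1 : ‖(1:ℂ) / (b:ℂ)‖ = 1/b := by
      rw [norm_div]
      simp [abs_of_pos hb]
    have hai : ‖((α : ℂ))⁻¹‖ = α⁻¹ := by
      rw [norm_inv, Complex.norm_real, Real.norm_eq_abs, abs_of_pos hα]
    have t1 : ‖2 / (b:ℂ) * ((k a : ℂ) * (z a * Complex.exp (z a * x) - w * Complex.exp (w * x)))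
          * (-((α⁻¹ : ℂ) * Complex.exp (((x - a)/α : ℝ) : ℂ)))‖
        ≤ (2/b) * (kn * (2*S)) * (α⁻¹ * Real.exp ((x - a)/α)) := by
      simp only [norm_mul, norm_neg]
      rw [hb2, hai, hEnorm, hkk]
      gcongr
      exact hdiffbd x hx
    have t2 : ‖(1/(b:ℂ)) * U a x * (-((α⁻¹ : ℂ) * ((α⁻¹ : ℂ) * Complex.exp (((x - a)/α : ℝ) : ℂ))))‖
        ≤ (1/b) * (2*kn) * (α⁻¹ * (α⁻¹ * Real.exp ((x - a)/α))) := by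
      simp only [norm_mul, norm_neg]
      rw [hb1, hai, hEnorm]
      gcongr
      · exact hUbd x hx.1.le
    have t3 : ‖U a x * (-((α⁻¹ : ℂ) * Complex.exp (((x - a)/α : ℝ) : ℂ)))‖
        ≤ (2*kn) * (α⁻¹ * Real.exp ((x - a)/α)) := by
      simp only [norm_mul, norm_neg]
      rw [hai, hEnorm]
      gcongr
      · exact hUbd x hx.1.le
    have hsum : (2/b) * (kn * (2*S)) * (α⁻¹ * Real.exp ((x - a)/α))
        + (1/b) * (2*kn) * (α⁻¹ * (α⁻¹ * Real.exp ((x - a)/α)))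
        + (2*kn) * (α⁻¹ * Real.exp ((x - a)/α))
        = (C*kn) * Real.exp ((x - a)/α) := by
      rw [hC]
      field_simp
      ring
    linarith only [t1, t2, t3, hsum]
  have I2bd : ∫ x in Set.Ioo (0:ℝ) a, ‖Err a x‖ ^ 2 ≤ (C*kn)^2 * (α/2) :=
    sq_int_bound hcontErr ha0.le hα hf2
  -- normalization
  set I := ∫ x in Set.Ioo (0:ℝ) a, ‖U0 a x‖ ^ 2 with hIdef
  have hk2I : (k a)^2 * I = 1 := by
    have h := hknorm a ha0 hcab
    calc (k a)^2 * I = ∫ x in Set.Ioo (0:ℝ) a, (k a)^2 * ‖U0 a x‖^2 :=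
          (integral_const_mul _ _).symm
    _ = ∫ x in Set.Ioo (0:ℝ) a, ‖(k a : ℂ) * U0 a x‖^2 := by
        congr 1
        funext x
        rw [norm_mul, mul_pow, Complex.norm_real, Real.norm_eq_abs, sq_abs]
    _ = 1 := h
  -- lower bound on I
  have hg_le : ∀ x ∈ Set.Ioo (0:ℝ) a,
      Real.exp (-(2*c/a) * x) - 2*Real.exp ((-b + c/a) * x) ≤ ‖U0 a x‖^2 := by
    intro x hx
    have hx0 : (0:ℝ) ≤ x := hx.1.le
    set A := Real.exp (-(c/a)*x) with hA
    set B := Real.exp ((-b + c/a)*x) with hB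
    have hA1 : A ≤ 1 := by
      rw [hA, ← Real.exp_zero]
      apply Real.exp_le_exp.mpr
      have h1 := mul_nonneg hca0.le hx0
      linarith only [h1]
    have hBA : B ≤ A := by
      apply Real.exp_le_exp.mpr
      have h1 := mul_nonneg (show (0:ℝ) ≤ b - 2*(c/a) by linarith only [hca, hb]) hx0
      linarith only [h1]
    have hnorm_ge : A - B ≤ ‖U0 a x‖ := by
      have h1 : ‖Complex.exp (z a * x)‖ = A := by rw [norm_cexp_mul_ofReal, hzre, hA]
      have h2 : ‖Complex.exp (w * x)‖ = B := by rw [norm_cexp_mul_ofReal, hwre, hB]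
      have h3 : U0 a x = Complex.exp (z a * x) - Complex.exp (w * x) := by
        simp only [hU0, ← hw]
      rw [h3, ← h1, ← h2]
      exact norm_sub_norm_le _ _
    have hAB0 : (0:ℝ) ≤ A - B := by linarith only [hBA]
    have hsq : (A - B)^2 ≤ ‖U0 a x‖^2 := pow_le_pow_left₀ hAB0 hnorm_ge 2
    have hA2 : A^2 = Real.exp (-(2*c/a)*x) := by
      rw [hA, sq, ← Real.exp_add]
      congr 1
      ring
    have hB0 : (0:ℝ) < B := Real.exp_pos _
    have hABle : A*B ≤ B := mul_le_of_le_one_left hB0.le hA1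
    have hexpand : (A - B)^2 = A^2 - 2*(A*B) + B^2 := by ring
    linarith only [hsq, hexpand, hABle, hA2, sq_nonneg B]
  have hIlow : a*D/2 ≤ I := by
    have r1ne : -(2*c/a) ≠ 0 := by
      have h1 : 0 < 2*c/a := by positivity
      linarith only [h1]
    have r2ne : (-b + c/a) ≠ 0 := by
      have : c/a ≤ b/4 := hca
      linarith only [this, hb]
    have hint : ∫ x in Set.Ioo (0:ℝ) a,
        (Real.exp (-(2*c/a) * x) - 2*Real.exp ((-b + c/a) * x)) ≤ I := by
      apply setIntegral_mono_on
      · exact cont_integrableOn (by fun_prop) a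
      · exact cont_integrableOn ((hcontU0.norm).pow 2) a
      · exact measurableSet_Ioo
      · exact hg_le
    have hsplit : ∫ x in Set.Ioo (0:ℝ) a,
        (Real.exp (-(2*c/a) * x) - 2*Real.exp ((-b + c/a) * x))
        = (∫ x in Set.Ioo (0:ℝ) a, Real.exp (-(2*c/a) * x))
          - 2 * ∫ x in Set.Ioo (0:ℝ) a, Real.exp ((-b + c/a) * x) := by
      rw [integral_sub (cont_integrableOn (by fun_prop) a)
        (cont_integrableOn (by fun_prop) a), integral_const_mul]
    have hval1 : ∫ x in Set.Ioo (0:ℝ) a, Real.exp (-(2*c/a) * x) = a*D := by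
      rw [exp_mul_setIntegral _ _ r1ne ha0.le]
      rw [show -(2*c/a)*a = -(2*c) by field_simp, hD]
      field_simp
      ring
    have hval2 : 2 * ∫ x in Set.Ioo (0:ℝ) a, Real.exp ((-b + c/a) * x) ≤ 4/b := by
      rw [exp_mul_setIntegral _ _ r2ne ha0.le]
      have hEp : 0 < Real.exp ((-b + c/a)*a) := Real.exp_pos _
      have hEl : Real.exp ((-b + c/a)*a) ≤ 1 := by
        rw [← Real.exp_zero]
        apply Real.exp_le_exp.mpr
        have h1 := mul_nonneg (show (0:ℝ) ≤ b - c/a by linarith only [hca, hb]) ha0.le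
        linarith only [h1]
      have hd2 : (Real.exp ((-b + c/a)*a) - 1) / (-b + c/a)
          = (1 - Real.exp ((-b + c/a)*a)) / (b - c/a) := by
        rw [div_eq_div_iff r2ne (by linarith only [hca, hb])]
        ring
      rw [hd2]
      have hden : b/2 ≤ b - c/a := by linarith only [hca, hb]
      have hnum : (1 - Real.exp ((-b + c/a)*a)) ≤ 1 := by linarith only [hEp]
      have h1 : (1 - Real.exp ((-b + c/a)*a)) / (b - c/a) ≤ 1 / (b/2) := by
        apply div_le_div₀ (by norm_num) hnum (by linarith only [hb]) hden
      have h3 : 2 * ((1 - Real.exp ((-b + c/a)*a)) / (b - c/a)) ≤ 2 * (1/(b/2)) :=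
        mul_le_mul_of_nonneg_left h1 (by norm_num)
      have h4 : 2 * ((1:ℝ)/(b/2)) = 4/b := by
        field_simp
        norm_num
      linarith only [h3, h4]
    have hfour : 4/b ≤ a*D/2 := by
      rw [div_le_div_iff₀ hb (by norm_num)]
      linarith only [haD]
    rw [hsplit, hval1] at hint
    linarith only [hint, hval2, hfour]
  have hIpos : 0 < I := lt_of_lt_of_le (by positivity) hIlow
  have hk2 : (k a)^2 ≤ 2/(a*D) := by
    have hkI : (k a)^2 = 1/I := by
      field_simp
      linarith only [hk2I]
    rw [hkI, div_le_div_iff₀ hIpos (by positivity)]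
    linarith only [hIlow]
  have hknb : kn ≤ Real.sqrt (2/(a*D)) := by
    rw [hkn, ← Real.sqrt_sq_eq_abs]
    exact Real.sqrt_le_sqrt hk2
  -- sqrt identity
  have hexpne : Real.exp (2*c) - 1 ≠ 0 := sub_ne_zero.mpr (ne_of_gt hexp2c)
  have hsqrt_eq : Real.sqrt (2/(a*D))
      = Real.sqrt 2 * Real.exp c * (Real.sqrt a)⁻¹ * Real.sqrt (2*c/(Real.exp (2*c) - 1)) := by
    have hec : Real.exp c = Real.sqrt (Real.exp (2*c)) := by
      rw [show (2:ℝ)*c = c + c by ring, Real.exp_add, Real.sqrt_mul_self (Real.exp_nonneg c)]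
    rw [hec, ← Real.sqrt_inv, ← Real.sqrt_mul (by norm_num),
      ← Real.sqrt_mul (by positivity), ← Real.sqrt_mul (by positivity)]
    congr 1
    rw [hD, Real.exp_neg]
    have he0 : Real.exp (2*c) ≠ 0 := (Real.exp_pos _).ne'
    field_simp
  -- assemble
  have hkn0 : (0:ℝ) ≤ kn := abs_nonneg _
  have s1 : Real.sqrt (∫ x in Set.Ioo (0:ℝ) a, ‖U a x - U a x * V a x‖ ^ 2)
      ≤ (2*kn) * Real.sqrt (α/2) := by
    refine (Real.sqrt_le_sqrt I1bd).trans ?_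
    rw [Real.sqrt_mul (by positivity), Real.sqrt_sq (by positivity)]
  have s2 : Real.sqrt (∫ x in Set.Ioo (0:ℝ) a, ‖Err a x‖ ^ 2)
      ≤ (C*kn) * Real.sqrt (α/2) := by
    refine (Real.sqrt_le_sqrt I2bd).trans ?_
    rw [Real.sqrt_mul (by positivity), Real.sqrt_sq (by positivity)]
  have hmid : (2*kn) * Real.sqrt (α/2) + (C*kn) * Real.sqrt (α/2)
      = (2 + C) * Real.sqrt (α/2) * kn := by ring
  have hlast : (2 + C) * Real.sqrt (α/2) * kn
      ≤ (2 + C) * Real.sqrt (α/2) * Real.sqrt 2 * Real.exp c * (Real.sqrt a)⁻¹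
        * Real.sqrt (2*c/(Real.exp (2*c) - 1)) := by
    have h1 : kn ≤ Real.sqrt 2 * Real.exp c * (Real.sqrt a)⁻¹
        * Real.sqrt (2*c/(Real.exp (2*c) - 1)) := hsqrt_eq ▸ hknb
    calc (2 + C) * Real.sqrt (α/2) * kn
        ≤ (2 + C) * Real.sqrt (α/2) * (Real.sqrt 2 * Real.exp c * (Real.sqrt a)⁻¹
          * Real.sqrt (2*c/(Real.exp (2*c) - 1))) :=
          mul_le_mul_of_nonneg_left h1 (by positivity)
    _ = (2 + C) * Real.sqrt (α/2) * Real.sqrt 2 * Real.exp c * (Real.sqrt a)⁻¹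
          * Real.sqrt (2*c/(Real.exp (2*c) - 1)) := by ring
  linarith only [s1, s2, hmid, hlast]
end
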